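/- Let α_1 ∣ ⋯ ∣ α_r be a chain of monic polynomials over an algebraically closed field, let g ≥ 1 and let A be an integer with Σ_{i=r−g+2}^{r} deg(α_i) < A ≤ Σ_{i=r−g+1}^{r} deg(α_i). Set h = min{ k : A − Σ_{i=r−g+2}^{r} deg(α_i) ≤ deg(α_{k−g+1}) } (convention α_j = 1 for j < 1). Then g ≤ h ≤ r, and w := deg(α_{h−g}) + deg(α_{h−g+1}) + Σ_{i=r−g+2}^{r} deg(α_i) − A satisfies deg(α_{h−g}) ≤ w < deg(α_{h−g+1}). -/
import Mathlib


/-- For a chain of monic polynomials `α_1 ∣ ⋯ ∣ α_r` over an algebraically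
closed field, `g ≥ 1` and `A` with
`Σ_{i=r−g+2}^{r} deg α_i < A ≤ Σ_{i=r−g+1}^{r} deg α_i`, setting
`h = min{k : A − Σ_{i=r−g+2}^{r} deg α_i ≤ deg α_{k−g+1}}` one has `g ≤ h ≤ r`
and `w = deg α_{h−g} + deg α_{h−g+1} + Σ_{i=r−g+2}^{r} deg α_i − A` satisfies
`deg α_{h−g} ≤ w < deg α_{h−g+1}`. -/
theorem stmt14 (F : Type*) [Field F] [IsAlgClosed F] (r : ℕ)
    (α : ℤ → Polynomial F)
    (hα1 : ∀ i : ℤ, i < 1 → α i = 1)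
    (hαm : ∀ i : ℤ, 1 ≤ i → i ≤ (r : ℤ) → (α i).Monic)
    (hαchain : ∀ i : ℤ, 1 ≤ i → i < (r : ℤ) → α i ∣ α (i + 1))
    (g : ℕ) (hg : 1 ≤ g) (A : ℤ)
    (hA1 : ∑ i ∈ Finset.Icc ((r : ℤ) - g + 2) (r : ℤ), ((α i).natDegree : ℤ) < A)
    (hA2 : A ≤ ∑ i ∈ Finset.Icc ((r : ℤ) - g + 1) (r : ℤ), ((α i).natDegree : ℤ)) :
    let T : ℤ := ∑ i ∈ Finset.Icc ((r : ℤ) - g + 2) (r : ℤ), ((α i).natDegree : ℤ)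
    let h : ℕ := sInf {k : ℕ | A - T ≤ ((α ((k : ℤ) - g + 1)).natDegree : ℤ)}
    let w : ℤ := ((α ((h : ℤ) - g)).natDegree : ℤ)
      + ((α ((h : ℤ) - g + 1)).natDegree : ℤ) + T - A
    g ≤ h ∧ h ≤ r ∧ ((α ((h : ℤ) - g)).natDegree : ℤ) ≤ w ∧
      w < ((α ((h : ℤ) - g + 1)).natDegree : ℤ) := by
  intro T h w
  have hgr : (g : ℤ) ≤ r := by
    by_contra hlt
    push_neg at hlt
    have : Finset.Icc ((r : ℤ) - g + 1) (r : ℤ) ⊆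
        Finset.Icc ((r : ℤ) - g + 2) (r : ℤ) ∪ {(r : ℤ) - g + 1} := by
      intro x hx
      simp only [Finset.mem_Icc, Finset.mem_union, Finset.mem_singleton] at hx ⊢
      omega
    -- in fact α (r - g + 1) = 1 since r - g + 1 < 1
    have h1 : α ((r : ℤ) - g + 1) = 1 := hα1 _ (by omega)
    have hins : Finset.Icc ((r : ℤ) - g + 1) (r : ℤ) =
        insert ((r : ℤ) - g + 1) (Finset.Icc ((r : ℤ) - g + 2) (r : ℤ)) := by
      ext x; simp only [Finset.mem_Icc, Finset.mem_insert]; omega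
    rw [hins, Finset.sum_insert (by simp only [Finset.mem_Icc]; omega), h1] at hA2
    simp only [Polynomial.natDegree_one, Nat.cast_zero, zero_add] at hA2
    exact absurd hA2 (not_le.mpr hA1)
  have hins : Finset.Icc ((r : ℤ) - g + 1) (r : ℤ) =
      insert ((r : ℤ) - g + 1) (Finset.Icc ((r : ℤ) - g + 2) (r : ℤ)) := by
    ext x; simp only [Finset.mem_Icc, Finset.mem_insert]; omega
  rw [hins, Finset.sum_insert (by simp only [Finset.mem_Icc]; omega)] at hA2
  -- r is in the set
  have hrmem : r ∈ {k : ℕ | A - T ≤ ((α ((k : ℤ) - g + 1)).natDegree : ℤ)} := by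
    simp only [Set.mem_setOf_eq]
    show A - T ≤ _
    omega
  have hmem : h ∈ {k : ℕ | A - T ≤ ((α ((k : ℤ) - g + 1)).natDegree : ℤ)} :=
    Nat.sInf_mem ⟨r, hrmem⟩
  have hhr : h ≤ r := Nat.sInf_le hrmem
  have hAT : 0 < A - T := by omega
  have hgh : g ≤ h := by
    by_contra hlt
    push_neg at hlt
    have h1 : α ((h : ℤ) - g + 1) = 1 := hα1 _ (by omega)
    simp only [Set.mem_setOf_eq, h1, Polynomial.natDegree_one, Nat.cast_zero] at hmem
    omega
  have hprev : h - 1 ∉ {k : ℕ | A - T ≤ ((α ((k : ℤ) - g + 1)).natDegree : ℤ)} :=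
    Nat.notMem_of_lt_sInf (by omega)
  simp only [Set.mem_setOf_eq, not_le] at hprev hmem
  have hcast : ((h - 1 : ℕ) : ℤ) - g + 1 = (h : ℤ) - g := by omega
  rw [hcast] at hprev
  refine ⟨hgh, hhr, ?_, ?_⟩ <;> simp only [w] <;> omega
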